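/- For every integer d > 1 and every real p with 0 < p < 1/2, the binary entropy function satisfies H(p) ≤ (2d / ln 2) · p^{1 - 1/d}. -/

import Mathlib

noncomputable def binEntropy2 (p : ℝ) : ℝ := -p * Real.logb 2 p - (1 - p) * Real.logb 2 (1 - p)

theorem entropy_power_bound (d : ℕ) (hd : 1 < d) (p : ℝ) (hp0 : 0 < p) (hp : p < 1 / 2) :
    binEntropy2 p ≤ (2 * d / Real.log 2) * p ^ ((1 : ℝ) - 1 / d) := by
  have hd2 : (2:ℝ) ≤ d := by exact_mod_cast hd
  have hp1 : p < 1 := by linarith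
  have hlog2 : 0 < Real.log 2 := Real.log_pos (by norm_num)
  have hdpos : (0:ℝ) < d := by linarith
  set P := p ^ ((1:ℝ) - 1/d) with hP
  have hPpos : 0 < P := Real.rpow_pos_of_pos hp0 _
  have hQpos : 0 < p ^ (-(1/(d:ℝ))) := Real.rpow_pos_of_pos hp0 _
  -- part 1 : -p * log p ≤ d * P
  have hlp : Real.log (p ^ (-(1/(d:ℝ)))) ≤ p ^ (-(1/(d:ℝ))) :=
    le_trans (Real.log_le_sub_one_of_pos hQpos) (by linarith)
  have hlog_eq : Real.log (p ^ (-(1/(d:ℝ)))) = -(1/(d:ℝ)) * Real.log p :=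
    Real.log_rpow hp0 _
  rw [hlog_eq] at hlp
  have hmul : p * p ^ (-(1/(d:ℝ))) = P := by
    rw [hP]
    rw [show (1:ℝ) - 1/d = 1 + (-(1/(d:ℝ))) by ring, Real.rpow_add hp0,
      Real.rpow_one]
  have h1 : -p * Real.log p ≤ d * P := by
    have := mul_le_mul_of_nonneg_left hlp (le_of_lt hp0)
    calc -p * Real.log p = d * (p * (-(1/(d:ℝ)) * Real.log p)) := by
          field_simp
      _ ≤ d * (p * p ^ (-(1/(d:ℝ)))) := by
          apply mul_le_mul_of_nonneg_left _ (le_of_lt hdpos)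
          exact this
      _ = d * P := by rw [hmul]
  -- part 2 : -(1-p) * log (1-p) ≤ p ≤ P
  have h1p : 0 < 1 - p := by linarith
  have hlq : Real.log (1-p)⁻¹ ≤ (1-p)⁻¹ - 1 :=
    Real.log_le_sub_one_of_pos (by positivity)
  rw [Real.log_inv] at hlq
  have h2 : -(1 - p) * Real.log (1 - p) ≤ p := by
    have := mul_le_mul_of_nonneg_left hlq (le_of_lt h1p)
    have hinv : (1 - p) * ((1-p)⁻¹ - 1) = p := by field_simp; ring
    nlinarith
  have hpP : p ≤ P := by
    have : p ^ ((1:ℝ)) ≤ p ^ ((1:ℝ) - 1/d) :=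
      Real.rpow_le_rpow_of_exponent_ge hp0 (le_of_lt hp1)
        (by nlinarith [one_div_pos.mpr hdpos])
    rwa [Real.rpow_one] at this
  have key : -p * Real.log p - (1 - p) * Real.log (1 - p) ≤ 2 * d * P := by
    nlinarith
  have e1 : binEntropy2 p = (-p * Real.log p - (1 - p) * Real.log (1 - p)) / Real.log 2 := by
    unfold binEntropy2 Real.logb
    ring
  have e2 : (2 * d / Real.log 2) * P = (2 * d * P) / Real.log 2 := by ring
  rw [e1, e2]
  exact div_le_div_of_nonneg_right key hlog2.le
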